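/- arXiv:1611.06277 — 2 statements merged into one kernel-verified Lean document; each statement's English description precedes it below -/
import Mathlib

section
/- For the linear system, the function F(x,t) = [A¹²; A²²] e^{tA²²} x̃ solves the orthogonal dynamics equation ∂F/∂t = QLF with initial condition F(x,0) = QLx = Ã x, where L is the Liouville operator of the linear system and Q = I − P with P the truncation projector. -/
open NormedSpace

/-- Auxiliary linear map: `y ↦ Sum.elim (B.mulVec y) (C.mulVec y)`. -/
def elimMap {m n : ℕ} (B : Matrix (Fin m) (Fin n) ℝ) (C : Matrix (Fin n) (Fin n) ℝ) :
    (Fin n → ℝ) →ₗ[ℝ] ((Fin m ⊕ Fin n) → ℝ) where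
  toFun v := Sum.elim (B.mulVec v) (C.mulVec v)
  map_add' u v := by funext i; cases i <;> simp [Matrix.mulVec_add]
  map_smul' c v := by funext i; cases i <;> simp [Matrix.mulVec_smul]

/-- Auxiliary linear map: `M ↦ M.mulVec v`. -/
def applyVec {n : ℕ} (v : Fin n → ℝ) :
    Matrix (Fin n) (Fin n) ℝ →ₗ[ℝ] (Fin n → ℝ) where
  toFun M := M.mulVec v
  map_add' M N := Matrix.add_mulVec M N v
  map_smul' c M := Matrix.smul_mulVec c M v

/-- For the linear system dφ/dt = Ax, the function
F(x,t) = [A¹²; A²²] e^{tA²²} x̃ solves the orthogonal dynamics equation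
∂F/∂t = QLF with F(x,0) = QLx = Ãx, where L is the Liouville operator of the
linear system (LF(x,t) being the derivative of F(·,t) at x in direction Ax)
and Q = I − P with P the truncation projector. -/
theorem stmt9 {m n : ℕ}
    (A11 : Matrix (Fin m) (Fin m) ℝ) (A12 : Matrix (Fin m) (Fin n) ℝ)
    (A21 : Matrix (Fin n) (Fin m) ℝ) (A22 : Matrix (Fin n) (Fin n) ℝ) :
    let A := Matrix.fromBlocks A11 A12 A21 A22
    let F : ((Fin m ⊕ Fin n) → ℝ) → ℝ → ((Fin m ⊕ Fin n) → ℝ) := fun x t =>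
      Sum.elim
        (A12.mulVec ((NormedSpace.exp (t • A22)).mulVec fun i => x (Sum.inr i)))
        (A22.mulVec ((NormedSpace.exp (t • A22)).mulVec fun i => x (Sum.inr i)))
    let LF : ((Fin m ⊕ Fin n) → ℝ) → ℝ → ((Fin m ⊕ Fin n) → ℝ) := fun x t =>
      fderiv ℝ (fun y => F y t) x (A.mulVec x)
    let trunc : ((Fin m ⊕ Fin n) → ℝ) → ((Fin m ⊕ Fin n) → ℝ) := fun x =>
      Sum.elim (fun i => x (Sum.inl i)) 0
    (∀ (x : (Fin m ⊕ Fin n) → ℝ) (t : ℝ),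
        HasDerivAt (F x) (LF x t - LF (trunc x) t) t)
    ∧ (∀ x : (Fin m ⊕ Fin n) → ℝ,
        F x 0 = (Matrix.fromBlocks (0 : Matrix (Fin m) (Fin m) ℝ) A12
          (0 : Matrix (Fin n) (Fin m) ℝ) A22).mulVec x) := by
  intro A F LF trunc
  letI : SeminormedRing (Matrix (Fin n) (Fin n) ℝ) := Matrix.linftyOpSemiNormedRing
  letI : NormedRing (Matrix (Fin n) (Fin n) ℝ) := Matrix.linftyOpNormedRing
  letI : NormedAlgebra ℝ (Matrix (Fin n) (Fin n) ℝ) := Matrix.linftyOpNormedAlgebra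
  constructor
  · intro x t
    set E := NormedSpace.exp (t • A22) with hE
    set xt : Fin n → ℝ := fun i => x (Sum.inr i) with hxt
    -- the derivative of t ↦ F x t
    have hexp : HasDerivAt (fun u : ℝ => NormedSpace.exp (u • A22)) (E * A22) t :=
      hasDerivAt_exp_smul_const A22 t
    set Φ : Matrix (Fin n) (Fin n) ℝ →L[ℝ] ((Fin m ⊕ Fin n) → ℝ) :=
      LinearMap.toContinuousLinearMap ((elimMap A12 A22).comp (applyVec xt)) with hΦ
    have hd : HasDerivAt (fun u : ℝ => Φ (NormedSpace.exp (u • A22))) (Φ (E * A22)) t :=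
      Φ.hasFDerivAt.comp_hasDerivAt t hexp
    have hFx : F x = fun u : ℝ => Φ (NormedSpace.exp (u • A22)) := rfl
    -- compute the fderiv
    set Ψ : ((Fin m ⊕ Fin n) → ℝ) →L[ℝ] ((Fin m ⊕ Fin n) → ℝ) :=
      LinearMap.toContinuousLinearMap
        ((elimMap A12 A22).comp ((Matrix.mulVecLin E).comp
          (LinearMap.funLeft ℝ ℝ Sum.inr))) with hΨ
    have hfun : (fun y => F y t) = ⇑Ψ := rfl
    have hfd : ∀ z : (Fin m ⊕ Fin n) → ℝ, fderiv ℝ (fun y => F y t) z = Ψ := by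
      intro z
      rw [hfun]
      exact Ψ.fderiv
    have hLF : LF x t - LF (trunc x) t = Ψ (A.mulVec x - A.mulVec (trunc x)) := by
      show fderiv ℝ (fun y => F y t) x (A.mulVec x)
          - fderiv ℝ (fun y => F y t) (trunc x) (A.mulVec (trunc x)) = _
      rw [hfd x, hfd (trunc x), map_sub]
    have hsub : A.mulVec x - A.mulVec (trunc x) = A.mulVec (Sum.elim 0 xt) := by
      have hvec : x - trunc x = Sum.elim (0 : Fin m → ℝ) xt := by
        funext i
        cases i with
        | inl a => simp [trunc]
        | inr b => simp [trunc, xt]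
      rw [← Matrix.mulVec_sub, hvec]
    have hblock : A.mulVec (Sum.elim 0 xt) = Sum.elim (A12.mulVec xt) (A22.mulVec xt) := by
      show (Matrix.fromBlocks A11 A12 A21 A22).mulVec (Sum.elim 0 xt) = _
      rw [Matrix.fromBlocks_mulVec]
      simp [Matrix.mulVec_zero]
    have key : LF x t - LF (trunc x) t = Φ (E * A22) := by
      rw [hLF, hsub, hblock]
      show (elimMap A12 A22) (E.mulVec ((Sum.elim (A12.mulVec xt) (A22.mulVec xt)) ∘ Sum.inr))
          = (elimMap A12 A22) ((E * A22).mulVec xt)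
      congr 1
      rw [← Matrix.mulVec_mulVec]
      rfl
    rw [key, hFx]
    exact hd
  · intro x
    have hx : x = Sum.elim (fun i => x (Sum.inl i)) (fun i => x (Sum.inr i)) := by
      funext i; cases i <;> rfl
    conv_rhs => rw [hx]
    rw [Matrix.fromBlocks_mulVec]
    show Sum.elim
        (A12.mulVec ((NormedSpace.exp ((0:ℝ) • A22)).mulVec fun i => x (Sum.inr i)))
        (A22.mulVec ((NormedSpace.exp ((0:ℝ) • A22)).mulVec fun i => x (Sum.inr i))) = _
    rw [zero_smul, NormedSpace.exp_zero, Matrix.one_mulVec]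
    simp [Matrix.zero_mulVec]
end

section
/- The Dyson formula holds for bounded operators: if L and QL are bounded linear operators on a Banach space with Q = I − P, then e^{tL} = e^{tQL} + ∫₀ᵗ e^{(t−s)L} PL e^{sQL} ds. -/
/-- The operator exponential e^{tM} as a power series. -/
noncomputable def opExp {X : Type*} [NormedAddCommGroup X] [NormedSpace ℝ X]
    [CompleteSpace X] (t : ℝ) (M : X →L[ℝ] X) : X →L[ℝ] X :=
  ∑' n : ℕ, (t ^ n / n.factorial : ℝ) • M ^ n

set_option synthInstance.maxHeartbeats 400000 in
open NormedSpace in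
lemma opExp_eq_exp {X : Type*} [NormedAddCommGroup X] [NormedSpace ℝ X]
    [CompleteSpace X] (t : ℝ) (M : X →L[ℝ] X) : opExp t M = exp (t • M) := by
  rw [opExp, exp_eq_tsum ℝ]
  congr 1
  ext n
  have : (t • M) ^ n = t ^ n • M ^ n := smul_pow t M n
  rw [this, smul_smul, div_eq_inv_mul]

open NormedSpace in
/-- Dyson formula for bounded operators: with Q = I − P,
e^{tL} = e^{tQL} + ∫₀ᵗ e^{(t−s)L} PL e^{sQL} ds. -/
theorem stmt13 {X : Type*} [NormedAddCommGroup X] [NormedSpace ℝ X] [CompleteSpace X]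
    (L P : X →L[ℝ] X) (hP : P * P = P) (Q : X →L[ℝ] X) (hQ : Q = 1 - P) :
    ∀ t : ℝ,
      opExp t L
        = opExp t (Q * L)
          + ∫ s in (0:ℝ)..t, opExp (t - s) L * (P * L) * opExp s (Q * L) := by
  intro t
  simp only [opExp_eq_exp]
  set F : ℝ → (X →L[ℝ] X) := fun s => exp ((t - s) • L) * exp (s • (Q * L)) with hF
  have hderiv : ∀ s : ℝ, HasDerivAt F
      (-(exp ((t - s) • L) * (P * L) * exp (s • (Q * L)))) s := by
    intro s
    have hg : HasDerivAt (fun u : ℝ => t - u) (-1) s := by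
      simpa using (hasDerivAt_id s).const_sub t
    have h1 : HasDerivAt (fun u : ℝ => exp ((t - u) • L))
        (-(exp ((t - s) • L) * L)) s := by
      have := (hasDerivAt_exp_smul_const (𝕂 := ℝ) L (t - s)).scomp s hg
      simp at this
      exact this
    have h2 : HasDerivAt (fun u : ℝ => exp (u • (Q * L)))
        ((Q * L) * exp (s • (Q * L))) s := hasDerivAt_exp_smul_const' (Q * L) s
    have := h1.mul h2
    refine this.congr_deriv ?_
    rw [hQ]
    noncomm_ring
  have c1 : Continuous fun s : ℝ => exp ((t - s) • L) :=
    (continuous_iff_continuousAt.2 fun x => (exp_analytic (𝕂 := ℝ) x).continuousAt).comp (by continuity)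
  have c2 : Continuous fun s : ℝ => exp (s • (Q * L)) :=
    (continuous_iff_continuousAt.2 fun x => (exp_analytic (𝕂 := ℝ) x).continuousAt).comp (by continuity)
  have hcont : Continuous fun s : ℝ =>
      -(exp ((t - s) • L) * (P * L) * exp (s • (Q * L))) :=
    ((c1.mul continuous_const).mul c2).neg
  have key : (∫ s in (0:ℝ)..t,
      -(exp ((t - s) • L) * (P * L) * exp (s • (Q * L)))) = F t - F 0 :=
    intervalIntegral.integral_eq_sub_of_hasDerivAt (fun s _ => hderiv s)
      (hcont.intervalIntegrable 0 t)
  rw [intervalIntegral.integral_neg] at key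
  have hFt : F t = exp (t • (Q * L)) := by
    simp [hF, NormedSpace.exp_zero]
  have hF0 : F 0 = exp (t • L) := by
    simp [hF, NormedSpace.exp_zero]
  rw [hFt, hF0] at key
  have h2 : (∫ s in (0:ℝ)..t, exp ((t - s) • L) * (P * L) * exp (s • (Q * L)))
      = exp (t • L) - exp (t • (Q * L)) := by
    have := neg_eq_iff_eq_neg.mp key
    rw [this]; abel
  rw [h2]; abel
end
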